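/- Assume f(0)=f'(0)=0. Then M₀ = {c ∈ ℂ : (f_n(0)) is bounded} is contained in the closed disk of radius 2: for any c with |c| > 2, the sequence (f_n(0)) is unbounded. Combined with the inclusion D(0,1/4) ⊂ M₀, one gets D(0,1/4) ⊂ M₀ ⊂ D(0,2). -/

import Mathlib

theorem stmt14 (f : Polynomial ℂ) (hf0 : f.eval 0 = 0) (hf1 : f.derivative.eval 0 = 0)
    (fs : ℂ → ℕ → ℂ → ℂ)
    (h0 : ∀ c z, fs c 0 z = z) (h1 : ∀ c z, fs c 1 z = f.eval z)
    (hrec : ∀ c n z, fs c (n + 2) z = fs c (n + 1) z * fs c n z + c) :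
    (∀ c : ℂ, 2 < ‖c‖ →
      ¬ BddAbove (Set.range fun n => ‖fs c n 0‖)) ∧
    Metric.ball (0 : ℂ) (1 / 4) ⊆
      {c : ℂ | BddAbove (Set.range fun n => ‖fs c n 0‖)} ∧
    {c : ℂ | BddAbove (Set.range fun n => ‖fs c n 0‖)} ⊆
      Metric.closedBall (0 : ℂ) 2 := by
  have hA0 : ∀ c : ℂ, fs c 0 0 = 0 := fun c => h0 c 0
  have hA1 : ∀ c : ℂ, fs c 1 0 = 0 := fun c => by rw [h1 c 0, hf0]
  have hA2 : ∀ c : ℂ, fs c 2 0 = c := fun c => by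
    rw [hrec c 0 0, hA1, hA0]; ring
  have hA3 : ∀ c : ℂ, fs c 3 0 = c := fun c => by
    rw [hrec c 1 0, hA2, hA1]; ring
  have low : ∀ (c x : ℂ), ‖x‖ - ‖c‖ ≤ ‖x + c‖ := by
    intro c x
    have h := norm_add_le (x + c) (-c)
    simp only [add_neg_cancel_right, norm_neg] at h
    linarith
  have main : ∀ c : ℂ, 2 < ‖c‖ →
      ¬ BddAbove (Set.range fun n => ‖fs c n 0‖) := by
    intro c hc
    set r := ‖c‖ with hr
    have key : ∀ n, r ≤ ‖fs c (n+2) 0‖ ∧ r ≤ ‖fs c (n+3) 0‖ := by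
      intro n
      induction n with
      | zero => rw [hA2, hA3]; exact ⟨le_refl r, le_refl r⟩
      | succ m ih =>
        refine ⟨ih.2, ?_⟩
        have h4 : fs c (m+4) 0 = fs c (m+3) 0 * fs c (m+2) 0 + c := hrec c (m+2) 0
        have hlow := low c (fs c (m+3) 0 * fs c (m+2) 0)
        rw [norm_mul] at hlow
        rw [show m+1+3 = m+4 by ring, h4]
        nlinarith [ih.1, ih.2]
    have growth : ∀ n, r * (r-1)^n ≤ ‖fs c (n+3) 0‖ := by
      intro n
      induction n with
      | zero => rw [hA3]; simp [hr]
      | succ m ih =>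
        have h4 : fs c (m+4) 0 = fs c (m+3) 0 * fs c (m+2) 0 + c := hrec c (m+2) 0
        have hlow := low c (fs c (m+3) 0 * fs c (m+2) 0)
        rw [norm_mul] at hlow
        have h2 := (key m).1
        have hpow : (1:ℝ) ≤ (r-1)^m := one_le_pow₀ (by linarith : (1:ℝ) ≤ r - 1)
        rw [show m+1+3 = m+4 by ring, h4]
        have habs : (0:ℝ) ≤ ‖fs c (m+3) 0‖ := norm_nonneg _
        calc r * (r-1)^(m+1) = r * (r-1)^m * (r-1) := by ring
          _ ≤ ‖fs c (m+3) 0‖ * ‖fs c (m+2) 0‖ - r := by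
              nlinarith
          _ ≤ _ := hlow
    rintro ⟨B, hB⟩
    obtain ⟨n, hn⟩ := pow_unbounded_of_one_lt B (by linarith : (1:ℝ) < r - 1)
    have hpow : (0:ℝ) < (r-1)^n := pow_pos (by linarith) n
    have h1' : B < r * (r-1)^n := by nlinarith
    have h2' : ‖fs c (n+3) 0‖ ≤ B := hB ⟨n+3, rfl⟩
    linarith [growth n]
  refine ⟨main, ?_, ?_⟩
  · intro c hc
    rw [Metric.mem_ball, dist_zero_right] at hc
    have bnd : ∀ n, ‖fs c n 0‖ ≤ 1/2 ∧ ‖fs c (n+1) 0‖ ≤ 1/2 := by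
      intro n
      induction n with
      | zero => rw [hA0, hA1]; simp
      | succ m ih =>
        refine ⟨ih.2, ?_⟩
        rw [show m+1+1 = m+2 by ring, hrec c m 0]
        calc ‖fs c (m+1) 0 * fs c m 0 + c‖
            ≤ ‖fs c (m+1) 0‖ * ‖fs c m 0‖ + ‖c‖ := by
              rw [← norm_mul]; exact norm_add_le _ _
          _ ≤ 1/2 := by nlinarith [ih.1, ih.2, norm_nonneg (fs c m 0),
              norm_nonneg (fs c (m+1) 0)]
    exact ⟨1/2, by rintro x ⟨n, rfl⟩; exact (bnd n).1⟩
  · intro c hc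
    rw [Set.mem_setOf_eq] at hc
    rw [Metric.mem_closedBall, dist_zero_right]
    by_contra h
    push_neg at h
    exact main c h hc
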